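/- Let R be a commutative ring (with binomial coefficients and factorials invertible as needed), B a 2n×2n antisymmetric matrix over R, and 0 ≤ t ≤ n. Then binom(n, t) · Pf(B) = Σ_{I} ε(I, Iᶜ) · Pf(B_I) · Pf(B_{Iᶜ}), where the sum runs over all subsets I ⊆ {1,…,2n} with |I| = 2t, B_I is the antisymmetric submatrix with rows and columns indexed by I, Iᶜ is the complement of I, and ε(I, Iᶜ) = (−1)^{#{(k,l) : k ∈ I, l ∈ Iᶜ, k > l}}. -/

import Mathlib

/-- The index `2i` inside `Fin (2n)`. -/
def pfIdx1 {n : ℕ} (i : Fin n) : Fin (2 * n) :=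
  ⟨2 * i.val, by have := i.isLt; omega⟩

/-- The index `2i+1` inside `Fin (2n)`. -/
def pfIdx2 {n : ℕ} (i : Fin n) : Fin (2 * n) :=
  ⟨2 * i.val + 1, by have := i.isLt; omega⟩

/-- The set of permutations `σ` of `{1,…,2n}` with `σ(2i−1) < σ(2i)` for all `i`
and `σ(1) < σ(3) < ⋯ < σ(2n−1)` (written 0-based). -/
def pfPerms (n : ℕ) : Finset (Equiv.Perm (Fin (2 * n))) :=
  Finset.univ.filter fun σ =>
    (∀ i : Fin n, σ (pfIdx1 i) < σ (pfIdx2 i)) ∧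
    (∀ i j : Fin n, i < j → σ (pfIdx1 i) < σ (pfIdx1 j))

/-- Combinatorial Pfaffian of a `2n × 2n` matrix. -/
def pfaffian {R : Type*} [CommRing R] {n : ℕ}
    (B : Matrix (Fin (2 * n)) (Fin (2 * n)) R) : R :=
  ∑ σ ∈ pfPerms n,
    ((Equiv.Perm.sign σ : ℤ) : R) * ∏ i : Fin n, B (σ (pfIdx1 i)) (σ (pfIdx2 i))

section PfaffianAux
open Equiv Finset

lemma sign_eq_signAux {k : ℕ} (f : Equiv.Perm (Fin k)) : Equiv.Perm.sign f = f.signAux := by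
  refine Equiv.Perm.swap_induction_on f (by simp [Equiv.Perm.signAux_one]) ?_
  intro f x y hxy ih
  rw [Equiv.Perm.sign_mul, Equiv.Perm.signAux_mul, ih, Equiv.Perm.sign_swap hxy,
    Equiv.Perm.signAux_swap hxy]

lemma sign_eq_pow_inversions {k : ℕ} (f : Equiv.Perm (Fin k)) :
    Equiv.Perm.sign f =
      (-1 : ℤˣ) ^ ((Equiv.Perm.finPairsLT k).filter (fun x => f x.1 ≤ f x.2)).card := by
  rw [sign_eq_signAux]
  unfold Equiv.Perm.signAux
  rw [Finset.prod_ite, Finset.prod_const, Finset.prod_const, one_pow, mul_one]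

/-- Permutations with each pair increasing, but pairs in arbitrary order. -/
def halfPerms (m : ℕ) : Finset (Equiv.Perm (Fin (2 * m))) :=
  Finset.univ.filter fun σ => ∀ i : Fin m, σ (pfIdx1 i) < σ (pfIdx2 i)

lemma mem_halfPerms {m : ℕ} {σ : Equiv.Perm (Fin (2 * m))} :
    σ ∈ halfPerms m ↔ ∀ i : Fin m, σ (pfIdx1 i) < σ (pfIdx2 i) := by
  simp [halfPerms]

lemma mem_pfPerms {m : ℕ} {σ : Equiv.Perm (Fin (2 * m))} :
    σ ∈ pfPerms m ↔ (∀ i : Fin m, σ (pfIdx1 i) < σ (pfIdx2 i)) ∧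
      (∀ i j : Fin m, i < j → σ (pfIdx1 i) < σ (pfIdx1 j)) := by
  simp [pfPerms]

def pairEquiv (m : ℕ) : Fin m × Fin 2 ≃ Fin (2 * m) where
  toFun p := ⟨2 * p.1.val + p.2.val, by have := p.1.isLt; have := p.2.isLt; omega⟩
  invFun x := (⟨x.val / 2, by have := x.isLt; omega⟩, ⟨x.val % 2, by omega⟩)
  left_inv p := by
    have := p.2.isLt
    ext
    · simp; omega
    · simp; omega
  right_inv x := by
    apply Fin.ext; simp; omega

def blockPerm {m : ℕ} (π : Equiv.Perm (Fin m)) : Equiv.Perm (Fin (2 * m)) :=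
  (pairEquiv m).permCongr (Equiv.prodCongrLeft (fun _ : Fin 2 => π))

lemma blockPerm_apply1 {m : ℕ} (π : Equiv.Perm (Fin m)) (i : Fin m) :
    blockPerm π (pfIdx1 i) = pfIdx1 (π i) := by
  have h2 : ((pairEquiv m).symm (pfIdx1 i)) = (i, (0 : Fin 2)) := by
    rw [Equiv.symm_apply_eq]
    apply Fin.ext
    simp [pairEquiv, pfIdx1]
  simp only [blockPerm, Equiv.permCongr_apply, h2, Equiv.prodCongrLeft_apply]
  apply Fin.ext
  simp [pairEquiv, pfIdx1]

lemma blockPerm_apply2 {m : ℕ} (π : Equiv.Perm (Fin m)) (i : Fin m) :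
    blockPerm π (pfIdx2 i) = pfIdx2 (π i) := by
  have h2 : ((pairEquiv m).symm (pfIdx2 i)) = (i, (1 : Fin 2)) := by
    rw [Equiv.symm_apply_eq]
    apply Fin.ext
    simp [pairEquiv, pfIdx2]
  simp only [blockPerm, Equiv.permCongr_apply, h2, Equiv.prodCongrLeft_apply]
  apply Fin.ext
  simp [pairEquiv, pfIdx2]

lemma sign_blockPerm {m : ℕ} (π : Equiv.Perm (Fin m)) :
    Equiv.Perm.sign (blockPerm π) = 1 := by
  rw [blockPerm, Equiv.Perm.sign_permCongr, Equiv.Perm.sign_prodCongrLeft]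
  rw [Finset.prod_const, Finset.card_univ, Fintype.card_fin]
  exact Int.units_sq _

lemma blockPerm_inv_apply1 {m : ℕ} (π : Equiv.Perm (Fin m)) (j : Fin m) :
    (blockPerm π)⁻¹ (pfIdx1 j) = pfIdx1 (π⁻¹ j) := by
  rw [Equiv.Perm.inv_def, Equiv.symm_apply_eq, blockPerm_apply1]
  rw [Equiv.Perm.coe_inv, Equiv.apply_symm_apply]

lemma blockPerm_inv_apply2 {m : ℕ} (π : Equiv.Perm (Fin m)) (j : Fin m) :
    (blockPerm π)⁻¹ (pfIdx2 j) = pfIdx2 (π⁻¹ j) := by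
  rw [Equiv.Perm.inv_def, Equiv.symm_apply_eq, blockPerm_apply2]
  rw [Equiv.Perm.coe_inv, Equiv.apply_symm_apply]
open Equiv Finset

section sorting
variable {m k : ℕ}

lemma card_image_univ {g : Fin m → Fin k} (hg : Function.Injective g) :
    (Finset.image g Finset.univ).card = m := by
  rw [Finset.card_image_of_injective _ hg, Finset.card_univ, Fintype.card_fin]

/-- the permutation sorting an injective function -/
noncomputable def sortPerm (g : Fin m → Fin k) (hg : Function.Injective g) :
    Equiv.Perm (Fin m) :=
  Equiv.ofBijective
    (fun i => ((Finset.image g Finset.univ).orderIsoOfFin (card_image_univ hg)).symm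
      ⟨g i, Finset.mem_image_of_mem _ (Finset.mem_univ _)⟩)
    (Finite.injective_iff_bijective.mp (fun a b hab => by
      have := congrArg (fun z => ((((Finset.image g Finset.univ).orderIsoOfFin
        (card_image_univ hg))) z : Fin k)) hab
      simp only [OrderIso.apply_symm_apply] at this
      exact hg this))

lemma orderEmbOfFin_sortPerm (g : Fin m → Fin k) (hg : Function.Injective g) (i : Fin m) :
    (Finset.image g Finset.univ).orderEmbOfFin (card_image_univ hg) (sortPerm g hg i) = g i := by
  rw [← Finset.coe_orderIsoOfFin_apply]
  show (((Finset.image g Finset.univ).orderIsoOfFin (card_image_univ hg))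
    (((Finset.image g Finset.univ).orderIsoOfFin (card_image_univ hg)).symm ⟨g i, _⟩) : Fin k) = g i
  rw [OrderIso.apply_symm_apply]

lemma orderEmbOfFin_image_eq {g : Fin m → Fin k} (hmono : StrictMono g)
    (hc : (Finset.image g Finset.univ).card = m) (j : Fin m) :
    (Finset.image g Finset.univ).orderEmbOfFin hc j = g j := by
  rw [← Finset.orderEmbOfFin_unique hc
    (fun x => Finset.mem_image_of_mem _ (Finset.mem_univ _)) hmono]

end sorting

section lemA
variable {R : Type*} [CommRing R]

lemma sigma_pfIdx1_inj {m : ℕ} (σ : Equiv.Perm (Fin (2 * m))) :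
    Function.Injective (fun i : Fin m => σ (pfIdx1 i)) := fun a b hab => by
  have h1 := (Equiv.injective σ) hab
  simpa [pfIdx1, Fin.ext_iff] using h1

lemma halfSum_eq (m : ℕ) (M : Matrix (Fin (2 * m)) (Fin (2 * m)) R) :
    ∑ σ ∈ halfPerms m, ((Equiv.Perm.sign σ : ℤ) : R) *
        ∏ i : Fin m, M (σ (pfIdx1 i)) (σ (pfIdx2 i)) =
      (m.factorial : R) * pfaffian M := by
  have key : ∑ σ ∈ halfPerms m, ((Equiv.Perm.sign σ : ℤ) : R) *
        ∏ i : Fin m, M (σ (pfIdx1 i)) (σ (pfIdx2 i)) =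
      ∑ p ∈ (pfPerms m) ×ˢ (Finset.univ : Finset (Equiv.Perm (Fin m))),
        ((Equiv.Perm.sign p.1 : ℤ) : R) * ∏ i : Fin m, M (p.1 (pfIdx1 i)) (p.1 (pfIdx2 i)) := by
    refine Finset.sum_nbij'
      (i := fun σ => (σ * (blockPerm (sortPerm (fun i => σ (pfIdx1 i)) (sigma_pfIdx1_inj σ)))⁻¹,
        sortPerm (fun i => σ (pfIdx1 i)) (sigma_pfIdx1_inj σ)))
      (j := fun p => p.1 * blockPerm p.2) ?_ ?_ ?_ ?_ ?_
    · -- maps into product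
      intro σ hσ
      rw [Finset.mem_product]
      refine ⟨?_, Finset.mem_univ _⟩
      rw [mem_pfPerms]
      set g : Fin m → Fin (2*m) := fun i => σ (pfIdx1 i) with hg
      set hginj : Function.Injective g := sigma_pfIdx1_inj σ
      have happ : ∀ j, (σ * (blockPerm (sortPerm g hginj))⁻¹) (pfIdx1 j) =
          (Finset.image g Finset.univ).orderEmbOfFin (card_image_univ hginj) j := by
        intro j
        rw [Equiv.Perm.mul_apply, blockPerm_inv_apply1]
        have := orderEmbOfFin_sortPerm g hginj ((sortPerm g hginj)⁻¹ j)
        rw [Equiv.Perm.coe_inv, Equiv.apply_symm_apply] at this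
        exact this.symm
      constructor
      · intro i
        rw [Equiv.Perm.mul_apply, Equiv.Perm.mul_apply, blockPerm_inv_apply1,
          blockPerm_inv_apply2]
        exact mem_halfPerms.mp hσ _
      · intro i j hij
        rw [happ, happ]
        exact ((Finset.image g Finset.univ).orderEmbOfFin (card_image_univ hginj)).strictMono hij
    · -- maps into halfPerms
      intro p hp
      rw [Finset.mem_product] at hp
      rw [mem_halfPerms]
      intro i
      rw [Equiv.Perm.mul_apply, Equiv.Perm.mul_apply, blockPerm_apply1, blockPerm_apply2]
      exact (mem_pfPerms.mp hp.1).1 _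
    · -- left inverse
      intro σ hσ
      group
    · -- right inverse
      intro p hp
      rw [Finset.mem_product] at hp
      obtain ⟨hp1, -⟩ := hp
      set τ := p.1
      set π := p.2
      set σ := τ * blockPerm π with hσdef
      set g : Fin m → Fin (2*m) := fun i => σ (pfIdx1 i) with hg
      have hginj : Function.Injective g := sigma_pfIdx1_inj σ
      have hgval : ∀ i, g i = τ (pfIdx1 (π i)) := by
        intro i; rw [hg]; simp only [hσdef, Equiv.Perm.mul_apply, blockPerm_apply1]
      have htmono : StrictMono (fun j => τ (pfIdx1 j)) := by
        intro a b hab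
        exact (mem_pfPerms.mp hp1).2 a b hab
      have himg : Finset.image g Finset.univ =
          Finset.image (fun j => τ (pfIdx1 j)) Finset.univ := by
        apply Finset.ext
        intro x
        simp only [Finset.mem_image, Finset.mem_univ, true_and]
        constructor
        · rintro ⟨i, rfl⟩; exact ⟨π i, (hgval i).symm⟩
        · rintro ⟨j, rfl⟩; exact ⟨π⁻¹ j, by rw [hgval, Equiv.Perm.coe_inv, Equiv.apply_symm_apply]⟩
      have hsort : sortPerm g hginj = π := by
        apply Equiv.ext
        intro i
        have hkey := orderEmbOfFin_sortPerm g hginj i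
        have hcard2 : (Finset.image (fun j => τ (pfIdx1 j)) Finset.univ).card = m :=
          card_image_univ (htmono.injective)
        have hemb : ∀ j, (Finset.image g Finset.univ).orderEmbOfFin (card_image_univ hginj) j
            = τ (pfIdx1 j) := by
          intro j
          have h5 := Finset.orderEmbOfFin_unique (card_image_univ hginj)
            (f := fun j => τ (pfIdx1 j))
            (fun x => by rw [himg]; exact Finset.mem_image_of_mem _ (Finset.mem_univ _)) htmono
          exact (congrFun h5 j).symm
        rw [hemb, hgval] at hkey
        exact htmono.injective hkey
      have : σ * (blockPerm (sortPerm g hginj))⁻¹ = τ := by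
        rw [hsort, hσdef]; group
      exact Prod.ext this hsort
    · -- value equality
      intro σ hσ
      set g : Fin m → Fin (2*m) := fun i => σ (pfIdx1 i) with hg
      have hginj : Function.Injective g := sigma_pfIdx1_inj σ
      set π := sortPerm g hginj with hπ
      set τ := σ * (blockPerm π)⁻¹ with hτ
      have hστ : σ = τ * blockPerm π := by rw [hτ]; group
      have hsign : Equiv.Perm.sign σ = Equiv.Perm.sign τ := by
        rw [hστ, Equiv.Perm.sign_mul, sign_blockPerm, mul_one]
      have hprod : ∏ i : Fin m, M (σ (pfIdx1 i)) (σ (pfIdx2 i)) =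
          ∏ i : Fin m, M (τ (pfIdx1 i)) (τ (pfIdx2 i)) := by
        calc ∏ i : Fin m, M (σ (pfIdx1 i)) (σ (pfIdx2 i))
            = ∏ i : Fin m, M (τ (pfIdx1 (π i))) (τ (pfIdx2 (π i))) := by
              apply Finset.prod_congr rfl
              intro i _
              rw [hστ]
              simp only [Equiv.Perm.mul_apply, blockPerm_apply1, blockPerm_apply2]
          _ = ∏ i : Fin m, M (τ (pfIdx1 i)) (τ (pfIdx2 i)) :=
              Equiv.prod_comp π (fun j => M (τ (pfIdx1 j)) (τ (pfIdx2 j)))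
      rw [hsign, hprod]
  rw [key, Finset.sum_product]
  rw [pfaffian, Finset.mul_sum]
  apply Finset.sum_congr rfl
  intro τ _
  dsimp only
  rw [Finset.sum_const, Finset.card_univ, Fintype.card_perm, Fintype.card_fin, nsmul_eq_mul]

end lemA


section psi
variable {n t : ℕ}

noncomputable def psiPerm (ht : t ≤ n) (I : Finset (Fin (2 * n))) (hI : I.card = 2 * t)
    (hJ : Iᶜ.card = 2 * (n - t)) : Equiv.Perm (Fin (2 * n)) :=
  Equiv.ofBijective
    (fun x => if hx : x.val < 2 * t then (I.orderIsoOfFin hI ⟨x.val, hx⟩ : Fin (2 * n))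
      else (Iᶜ.orderIsoOfFin hJ ⟨x.val - 2 * t, by have := x.isLt; omega⟩ : Fin (2 * n)))
    (Finite.injective_iff_bijective.mp (by
      intro a b hab
      dsimp only at hab
      by_cases ha : a.val < 2 * t <;> by_cases hb : b.val < 2 * t
      · rw [dif_pos ha, dif_pos hb] at hab
        have h0 := (I.orderIsoOfFin hI).injective (Subtype.ext hab)
        apply Fin.ext
        simpa [Fin.ext_iff] using h0
      · rw [dif_pos ha, dif_neg hb] at hab
        exfalso
        have h1 := Finset.coe_mem ((I.orderIsoOfFin hI) ⟨a.val, ha⟩)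
        have h2 := Finset.coe_mem ((Iᶜ.orderIsoOfFin hJ)
          ⟨a.val - 2 * t, by have := a.isLt; omega⟩)
        rw [hab] at h1
        exact (Finset.mem_compl.mp (Finset.coe_mem _)) h1
      · rw [dif_neg ha, dif_pos hb] at hab
        exfalso
        have h1 := Finset.coe_mem ((I.orderIsoOfFin hI) ⟨b.val, hb⟩)
        rw [← hab] at h1
        exact (Finset.mem_compl.mp (Finset.coe_mem _)) h1
      · rw [dif_neg ha, dif_neg hb] at hab
        have h0 := (Iᶜ.orderIsoOfFin hJ).injective (Subtype.ext hab)
        have ha' := a.isLt; have hb' := b.isLt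
        apply Fin.ext
        have h3 := Fin.ext_iff.mp h0
        simp only at h3
        omega))

variable (ht : t ≤ n) (I : Finset (Fin (2 * n))) (hI : I.card = 2 * t)
    (hJ : Iᶜ.card = 2 * (n - t))

lemma psiPerm_apply_lt {x : Fin (2 * n)} (hx : x.val < 2 * t) :
    psiPerm ht I hI hJ x = (I.orderIsoOfFin hI ⟨x.val, hx⟩ : Fin (2 * n)) := by
  simp only [psiPerm, Equiv.ofBijective_apply, dif_pos hx]

lemma psiPerm_apply_ge {x : Fin (2 * n)} (hx : ¬ x.val < 2 * t) :
    psiPerm ht I hI hJ x =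
      (Iᶜ.orderIsoOfFin hJ ⟨x.val - 2 * t, by have := x.isLt; omega⟩ : Fin (2 * n)) := by
  simp only [psiPerm, Equiv.ofBijective_apply, dif_neg hx]

lemma psiPerm_mem_iff {x : Fin (2 * n)} :
    psiPerm ht I hI hJ x ∈ I ↔ x.val < 2 * t := by
  by_cases hx : x.val < 2 * t
  · rw [psiPerm_apply_lt ht I hI hJ hx]
    exact iff_of_true (I.orderIsoOfFin hI _).2 hx
  · rw [psiPerm_apply_ge ht I hI hJ hx]
    exact iff_of_false (Finset.mem_compl.mp (Iᶜ.orderIsoOfFin hJ _).2) hx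

lemma psiPerm_strictMono_lt {x y : Fin (2 * n)} (hx : x.val < 2 * t) (hy : y.val < 2 * t)
    (hxy : x < y) : psiPerm ht I hI hJ x < psiPerm ht I hI hJ y := by
  rw [psiPerm_apply_lt ht I hI hJ hx, psiPerm_apply_lt ht I hI hJ hy]
  have : (⟨x.val, hx⟩ : Fin (2 * t)) < ⟨y.val, hy⟩ := hxy
  exact Subtype.coe_lt_coe.mpr ((I.orderIsoOfFin hI).lt_iff_lt.mpr this)

lemma psiPerm_strictMono_ge {x y : Fin (2 * n)} (hx : ¬ x.val < 2 * t) (hy : ¬ y.val < 2 * t)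
    (hxy : x < y) : psiPerm ht I hI hJ x < psiPerm ht I hI hJ y := by
  rw [psiPerm_apply_ge ht I hI hJ hx, psiPerm_apply_ge ht I hI hJ hy]
  have h4 : (⟨x.val - 2 * t, by have := x.isLt; omega⟩ : Fin (2 * (n - t))) <
      ⟨y.val - 2 * t, by have := y.isLt; omega⟩ := by
    simp only [Fin.mk_lt_mk]
    have := Fin.lt_def.mp hxy
    omega
  exact Subtype.coe_lt_coe.mpr ((Iᶜ.orderIsoOfFin hJ).lt_iff_lt.mpr h4)

lemma sign_psiPerm :
    Equiv.Perm.sign (psiPerm ht I hI hJ) =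
      (-1 : ℤˣ) ^ (Finset.univ.filter
        (fun p : Fin (2 * n) × Fin (2 * n) => p.1 ∈ I ∧ p.2 ∈ Iᶜ ∧ p.2 < p.1)).card := by
  set ψ := psiPerm ht I hI hJ with hψ
  rw [sign_eq_pow_inversions]
  congr 1
  refine Finset.card_nbij (fun a => (ψ a.2, ψ a.1)) ?_ ?_ ?_
  · intro a ha
    rw [Finset.mem_coe, Finset.mem_filter] at ha
    obtain ⟨hlt, hle⟩ := ha
    rw [Equiv.Perm.mem_finPairsLT] at hlt
    have hne : ψ a.1 ≠ ψ a.2 := fun h => (ne_of_gt hlt) (ψ.injective h)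
    have hvlt : ψ a.1 < ψ a.2 := lt_of_le_of_ne hle hne
    have hcase : a.2.val < 2 * t ∧ ¬ a.1.val < 2 * t := by
      by_cases h2 : a.2.val < 2 * t <;> by_cases h1 : a.1.val < 2 * t
      · exact absurd (psiPerm_strictMono_lt ht I hI hJ h2 h1 hlt) (not_lt.mpr hle)
      · exact ⟨h2, h1⟩
      · exact absurd (Fin.lt_def.mp hlt) (by omega)
      · exact absurd (psiPerm_strictMono_ge ht I hI hJ h2 h1 hlt) (not_lt.mpr hle)
    rw [Finset.mem_coe, Finset.mem_filter]
    refine ⟨Finset.mem_univ _, ?_, ?_, hvlt⟩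
    · exact (psiPerm_mem_iff ht I hI hJ).mpr hcase.1
    · exact Finset.mem_compl.mpr (fun hmem =>
        hcase.2 ((psiPerm_mem_iff ht I hI hJ).mp hmem))
  · intro a ha b hb hab
    simp only [Prod.mk.injEq] at hab
    have h1 := ψ.injective hab.1
    have h2 := ψ.injective hab.2
    exact Sigma.ext (by rw [h2]) (by rw [h1])
  · rintro ⟨k, l⟩ hb
    simp only [Finset.coe_filter, Set.mem_setOf_eq, Finset.mem_univ, true_and] at hb
    obtain ⟨hk, hl, hlk⟩ := hb
    have hq : (ψ.symm k).val < 2 * t := by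
      rw [← psiPerm_mem_iff ht I hI hJ (x := ψ.symm k), Equiv.apply_symm_apply]
      exact hk
    have hp : ¬ (ψ.symm l).val < 2 * t := by
      rw [← psiPerm_mem_iff ht I hI hJ (x := ψ.symm l), Equiv.apply_symm_apply]
      exact Finset.mem_compl.mp hl
    refine ⟨⟨ψ.symm l, ψ.symm k⟩, ?_, ?_⟩
    · simp only [Finset.coe_filter, Set.mem_setOf_eq, Equiv.Perm.mem_finPairsLT]
      constructor
      · show ψ.symm k < ψ.symm l
        rw [Fin.lt_def]; omega
      · show ψ (ψ.symm l) ≤ ψ (ψ.symm k)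
        rw [Equiv.apply_symm_apply, Equiv.apply_symm_apply]
        exact le_of_lt hlk
    · simp only [Equiv.apply_symm_apply]

end psi


section merge
variable {n t : ℕ}

def posL (ht : t ≤ n) (a : Fin (2 * t)) : Fin (2 * n) :=
  ⟨a.val, by have := a.isLt; omega⟩

def posR (ht : t ≤ n) (b : Fin (2 * (n - t))) : Fin (2 * n) :=
  ⟨2 * t + b.val, by have := b.isLt; omega⟩

def mergeEquiv (ht : t ≤ n) : Fin (2 * t) ⊕ Fin (2 * (n - t)) ≃ Fin (2 * n) :=
  finSumFinEquiv.trans (finCongr (by omega))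

lemma mergeEquiv_inl (ht : t ≤ n) (a : Fin (2 * t)) :
    mergeEquiv ht (Sum.inl a) = posL ht a := by
  apply Fin.ext
  simp [mergeEquiv, posL]

lemma mergeEquiv_inr (ht : t ≤ n) (b : Fin (2 * (n - t))) :
    mergeEquiv ht (Sum.inr b) = posR ht b := by
  apply Fin.ext
  simp [mergeEquiv, posR]

def rhoPerm (ht : t ≤ n) (σ1 : Equiv.Perm (Fin (2 * t))) (σ2 : Equiv.Perm (Fin (2 * (n - t)))) :
    Equiv.Perm (Fin (2 * n)) :=
  (mergeEquiv ht).permCongr (Equiv.sumCongr σ1 σ2)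

lemma rhoPerm_posL (ht : t ≤ n) (σ1 : Equiv.Perm (Fin (2 * t)))
    (σ2 : Equiv.Perm (Fin (2 * (n - t)))) (a : Fin (2 * t)) :
    rhoPerm ht σ1 σ2 (posL ht a) = posL ht (σ1 a) := by
  have h1 : (mergeEquiv ht).symm (posL ht a) = Sum.inl a := by
    rw [Equiv.symm_apply_eq, mergeEquiv_inl]
  rw [rhoPerm, Equiv.permCongr_apply, h1]
  simp [mergeEquiv_inl]

lemma rhoPerm_posR (ht : t ≤ n) (σ1 : Equiv.Perm (Fin (2 * t)))
    (σ2 : Equiv.Perm (Fin (2 * (n - t)))) (b : Fin (2 * (n - t))) :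
    rhoPerm ht σ1 σ2 (posR ht b) = posR ht (σ2 b) := by
  have h1 : (mergeEquiv ht).symm (posR ht b) = Sum.inr b := by
    rw [Equiv.symm_apply_eq, mergeEquiv_inr]
  rw [rhoPerm, Equiv.permCongr_apply, h1]
  simp [mergeEquiv_inr]

lemma sign_rhoPerm (ht : t ≤ n) (σ1 : Equiv.Perm (Fin (2 * t)))
    (σ2 : Equiv.Perm (Fin (2 * (n - t)))) :
    Equiv.Perm.sign (rhoPerm ht σ1 σ2) = Equiv.Perm.sign σ1 * Equiv.Perm.sign σ2 := by
  rw [rhoPerm, Equiv.Perm.sign_permCongr, Equiv.Perm.sign_sumCongr]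

lemma posL_inj (ht : t ≤ n) : Function.Injective (posL ht) := by
  intro a b hab
  apply Fin.ext
  have := Fin.ext_iff.mp hab
  simpa [posL] using this

lemma posR_inj (ht : t ≤ n) : Function.Injective (posR ht) := by
  intro a b hab
  apply Fin.ext
  have := Fin.ext_iff.mp hab
  simp only [posR] at this
  omega

variable (ht : t ≤ n)

/-- the first-block image of a permutation -/
def keyI (σ : Equiv.Perm (Fin (2 * n))) : Finset (Fin (2 * n)) :=
  Finset.image (fun a : Fin (2 * t) => σ (posL ht a)) Finset.univ

lemma gL_inj (σ : Equiv.Perm (Fin (2 * n))) :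
    Function.Injective (fun a : Fin (2 * t) => σ (posL ht a)) :=
  fun a b hab => posL_inj ht (σ.injective hab)

lemma gR_inj (σ : Equiv.Perm (Fin (2 * n))) :
    Function.Injective (fun b : Fin (2 * (n - t)) => σ (posR ht b)) :=
  fun a b hab => posR_inj ht (σ.injective hab)

noncomputable def sigma1of (σ : Equiv.Perm (Fin (2 * n))) : Equiv.Perm (Fin (2 * t)) :=
  sortPerm _ (gL_inj ht σ)

noncomputable def sigma2of (σ : Equiv.Perm (Fin (2 * n))) : Equiv.Perm (Fin (2 * (n - t))) :=
  sortPerm _ (gR_inj ht σ)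

lemma sigma1of_def (σ : Equiv.Perm (Fin (2 * n))) :
    sigma1of ht σ = sortPerm (fun a : Fin (2 * t) => σ (posL ht a)) (gL_inj ht σ) := rfl

lemma sigma2of_def (σ : Equiv.Perm (Fin (2 * n))) :
    sigma2of ht σ = sortPerm (fun b : Fin (2 * (n - t)) => σ (posR ht b)) (gR_inj ht σ) := rfl

lemma orderEmbOfFin_congr {α : Type*} [LinearOrder α] {s s' : Finset α} (hss : s = s')
    {k : ℕ} (h : s.card = k) (h' : s'.card = k) (j : Fin k) :
    s.orderEmbOfFin h j = s'.orderEmbOfFin h' j := by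
  subst hss; rfl

variable (I : Finset (Fin (2 * n))) (hI : I.card = 2 * t) (hJ : Iᶜ.card = 2 * (n - t))

lemma keyI_compl {σ : Equiv.Perm (Fin (2 * n))} (hkey : keyI ht σ = I) :
    Finset.image (fun b : Fin (2 * (n - t)) => σ (posR ht b)) Finset.univ = Iᶜ := by
  apply Finset.ext
  intro x
  simp only [Finset.mem_image, Finset.mem_univ, true_and, Finset.mem_compl]
  constructor
  · rintro ⟨b, rfl⟩ hmem
    rw [← hkey, keyI] at hmem
    simp only [Finset.mem_image, Finset.mem_univ, true_and] at hmem
    obtain ⟨a, ha⟩ := hmem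
    have := σ.injective ha
    have h1 := Fin.ext_iff.mp this
    have := a.isLt
    simp only [posL, posR] at h1
    omega
  · intro hx
    set p := σ.symm x with hp
    have hpval : ¬ p.val < 2 * t := by
      intro hlt
      apply hx
      rw [← hkey, keyI]
      simp only [Finset.mem_image, Finset.mem_univ, true_and]
      exact ⟨⟨p.val, hlt⟩, by
        rw [show posL ht ⟨p.val, hlt⟩ = p from Fin.ext rfl, hp, Equiv.apply_symm_apply]⟩
    refine ⟨⟨p.val - 2 * t, by have := p.isLt; omega⟩, ?_⟩
    rw [show posR ht ⟨p.val - 2 * t, _⟩ = p from Fin.ext (by simp [posR]; omega), hp,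
      Equiv.apply_symm_apply]

lemma key1 {σ : Equiv.Perm (Fin (2 * n))} (hkey : keyI ht σ = I) (a : Fin (2 * t)) :
    (I.orderIsoOfFin hI (sigma1of ht σ a) : Fin (2 * n)) = σ (posL ht a) := by
  rw [Finset.coe_orderIsoOfFin_apply]
  rw [orderEmbOfFin_congr hkey.symm hI (card_image_univ (gL_inj ht σ))]
  exact orderEmbOfFin_sortPerm _ (gL_inj ht σ) a

lemma key2 {σ : Equiv.Perm (Fin (2 * n))} (hkey : keyI ht σ = I) (b : Fin (2 * (n - t))) :
    (Iᶜ.orderIsoOfFin hJ (sigma2of ht σ b) : Fin (2 * n)) = σ (posR ht b) := by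
  rw [Finset.coe_orderIsoOfFin_apply]
  rw [orderEmbOfFin_congr (keyI_compl ht I hkey).symm hJ
    (card_image_univ (gR_inj ht σ))]
  exact orderEmbOfFin_sortPerm _ (gR_inj ht σ) b

lemma sortPerm_lt_iff {m k : ℕ} (g : Fin m → Fin k) (hg : Function.Injective g)
    {a b : Fin m} : sortPerm g hg a < sortPerm g hg b ↔ g a < g b := by
  conv_rhs => rw [← orderEmbOfFin_sortPerm g hg a, ← orderEmbOfFin_sortPerm g hg b]
  exact (((Finset.image g Finset.univ).orderEmbOfFin
    (card_image_univ hg)).strictMono.lt_iff_lt).symm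

end merge


section fiber
variable {R : Type*} [CommRing R] {n t : ℕ} (ht : t ≤ n)
variable (I : Finset (Fin (2 * n))) (hI : I.card = 2 * t) (hJ : Iᶜ.card = 2 * (n - t))
variable (B : Matrix (Fin (2 * n)) (Fin (2 * n)) R)

lemma buildL (σ1 : Equiv.Perm (Fin (2 * t))) (σ2 : Equiv.Perm (Fin (2 * (n - t))))
    (a : Fin (2 * t)) :
    (psiPerm ht I hI hJ * rhoPerm ht σ1 σ2) (posL ht a) =
      (I.orderIsoOfFin hI (σ1 a) : Fin (2 * n)) := by
  rw [Equiv.Perm.mul_apply, rhoPerm_posL]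
  have hx : (posL ht (σ1 a)).val < 2 * t := (σ1 a).isLt
  rw [psiPerm_apply_lt ht I hI hJ hx]
  exact congrArg (fun z => ((I.orderIsoOfFin hI z : Fin (2 * n)))) (Fin.ext rfl)

lemma buildR (σ1 : Equiv.Perm (Fin (2 * t))) (σ2 : Equiv.Perm (Fin (2 * (n - t))))
    (b : Fin (2 * (n - t))) :
    (psiPerm ht I hI hJ * rhoPerm ht σ1 σ2) (posR ht b) =
      (Iᶜ.orderIsoOfFin hJ (σ2 b) : Fin (2 * n)) := by
  rw [Equiv.Perm.mul_apply, rhoPerm_posR]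
  have hx : ¬ (posR ht (σ2 b)).val < 2 * t := by simp [posR]
  rw [psiPerm_apply_ge ht I hI hJ hx]
  exact congrArg (fun z => ((Iᶜ.orderIsoOfFin hJ z : Fin (2 * n)))) (Fin.ext (by simp [posR]))

lemma fiber_sum :
    ∑ σ ∈ (halfPerms n).filter (fun σ => keyI ht σ = I),
        ((Equiv.Perm.sign σ : ℤ) : R) * ∏ i : Fin n, B (σ (pfIdx1 i)) (σ (pfIdx2 i)) =
      ((Equiv.Perm.sign (psiPerm ht I hI hJ) : ℤ) : R) *
      ((∑ σ1 ∈ halfPerms t, ((Equiv.Perm.sign σ1 : ℤ) : R) * ∏ i : Fin t,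
          B (I.orderIsoOfFin hI (σ1 (pfIdx1 i)) : Fin (2 * n))
            (I.orderIsoOfFin hI (σ1 (pfIdx2 i)) : Fin (2 * n))) *
       (∑ σ2 ∈ halfPerms (n - t), ((Equiv.Perm.sign σ2 : ℤ) : R) * ∏ i : Fin (n - t),
          B (Iᶜ.orderIsoOfFin hJ (σ2 (pfIdx1 i)) : Fin (2 * n))
            (Iᶜ.orderIsoOfFin hJ (σ2 (pfIdx2 i)) : Fin (2 * n)))) := by
  rw [Finset.sum_mul_sum, Finset.mul_sum]
  simp only [Finset.mul_sum]
  rw [← Finset.sum_product']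
  refine Finset.sum_nbij' (i := fun σ => (sigma1of ht σ, sigma2of ht σ))
    (j := fun p => psiPerm ht I hI hJ * rhoPerm ht p.1 p.2) ?_ ?_ ?_ ?_ ?_
  · -- forward maps into product
    intro σ hσ
    rw [Finset.mem_filter] at hσ
    obtain ⟨hhalf, hkey⟩ := hσ
    rw [Finset.mem_product]
    dsimp only
    constructor
    · rw [mem_halfPerms]
      intro i
      rw [sigma1of_def, sortPerm_lt_iff]
      have e1 : posL ht (pfIdx1 i) = pfIdx1 (⟨i.val, by omega⟩ : Fin n) := by
        apply Fin.ext; simp [posL, pfIdx1]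
      have e2 : posL ht (pfIdx2 i) = pfIdx2 (⟨i.val, by omega⟩ : Fin n) := by
        apply Fin.ext; simp [posL, pfIdx2]
      show σ (posL ht (pfIdx1 i)) < σ (posL ht (pfIdx2 i))
      rw [e1, e2]
      exact mem_halfPerms.mp hhalf _
    · rw [mem_halfPerms]
      intro i
      rw [sigma2of_def, sortPerm_lt_iff]
      have e1 : posR ht (pfIdx1 i) = pfIdx1 (⟨t + i.val, by have := i.isLt; omega⟩ : Fin n) := by
        apply Fin.ext; simp [posR, pfIdx1]; omega
      have e2 : posR ht (pfIdx2 i) = pfIdx2 (⟨t + i.val, by have := i.isLt; omega⟩ : Fin n) := by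
        apply Fin.ext; simp [posR, pfIdx2]; omega
      show σ (posR ht (pfIdx1 i)) < σ (posR ht (pfIdx2 i))
      rw [e1, e2]
      exact mem_halfPerms.mp hhalf _
  · -- backward maps into fiber
    intro p hp
    rw [Finset.mem_product] at hp
    obtain ⟨hp1, hp2⟩ := hp
    rw [Finset.mem_filter]
    constructor
    · rw [mem_halfPerms]
      intro i
      by_cases hit : i.val < t
      · have e1 : pfIdx1 i = posL ht (pfIdx1 (⟨i.val, hit⟩ : Fin t)) := by
          apply Fin.ext; simp [posL, pfIdx1]
        have e2 : pfIdx2 i = posL ht (pfIdx2 (⟨i.val, hit⟩ : Fin t)) := by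
          apply Fin.ext; simp [posL, pfIdx2]
        rw [e1, e2, buildL, buildL]
        exact Subtype.coe_lt_coe.mpr ((I.orderIsoOfFin hI).lt_iff_lt.mpr
          (mem_halfPerms.mp hp1 _))
      · have hit' : i.val - t < n - t := by have := i.isLt; omega
        have e1 : pfIdx1 i = posR ht (pfIdx1 (⟨i.val - t, hit'⟩ : Fin (n - t))) := by
          apply Fin.ext; simp [posR, pfIdx1]; omega
        have e2 : pfIdx2 i = posR ht (pfIdx2 (⟨i.val - t, hit'⟩ : Fin (n - t))) := by
          apply Fin.ext; simp [posR, pfIdx2]; omega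
        rw [e1, e2, buildR, buildR]
        exact Subtype.coe_lt_coe.mpr ((Iᶜ.orderIsoOfFin hJ).lt_iff_lt.mpr
          (mem_halfPerms.mp hp2 _))
    · rw [keyI]
      apply Finset.ext
      intro x
      simp only [Finset.mem_image, Finset.mem_univ, true_and]
      constructor
      · rintro ⟨a, rfl⟩
        rw [buildL]
        exact Finset.coe_mem _
      · intro hx
        refine ⟨p.1⁻¹ ((I.orderIsoOfFin hI).symm ⟨x, hx⟩), ?_⟩
        rw [buildL, Equiv.Perm.coe_inv, Equiv.apply_symm_apply, OrderIso.apply_symm_apply]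
  · -- left inverse
    intro σ hσ
    rw [Finset.mem_filter] at hσ
    obtain ⟨hhalf, hkey⟩ := hσ
    apply Equiv.ext
    intro x
    by_cases hx : x.val < 2 * t
    · have e1 : x = posL ht ⟨x.val, hx⟩ := Fin.ext rfl
      conv_lhs => rw [e1]
      rw [buildL, key1 ht I hI hkey]
      rw [← e1]
    · have e1 : x = posR ht ⟨x.val - 2 * t, by have := x.isLt; omega⟩ := by
        apply Fin.ext; simp [posR]; omega
      conv_lhs => rw [e1]
      rw [buildR, key2 ht I hJ hkey]
      rw [← e1]
  · -- right inverse
    intro p hp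
    have hkey' : keyI ht (psiPerm ht I hI hJ * rhoPerm ht p.1 p.2) = I := by
      rw [keyI]
      apply Finset.ext
      intro x
      simp only [Finset.mem_image, Finset.mem_univ, true_and]
      constructor
      · rintro ⟨a, rfl⟩
        rw [buildL]
        exact Finset.coe_mem _
      · intro hx
        refine ⟨p.1⁻¹ ((I.orderIsoOfFin hI).symm ⟨x, hx⟩), ?_⟩
        rw [buildL, Equiv.Perm.coe_inv, Equiv.apply_symm_apply, OrderIso.apply_symm_apply]
    have hc1 : sigma1of ht (psiPerm ht I hI hJ * rhoPerm ht p.1 p.2) = p.1 := by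
      apply Equiv.ext
      intro a
      have h1 := key1 ht I hI hkey' a
      rw [buildL] at h1
      exact (I.orderIsoOfFin hI).injective (Subtype.ext h1)
    have hc2 : sigma2of ht (psiPerm ht I hI hJ * rhoPerm ht p.1 p.2) = p.2 := by
      apply Equiv.ext
      intro b
      have h1 := key2 ht I hJ hkey' b
      rw [buildR] at h1
      exact (Iᶜ.orderIsoOfFin hJ).injective (Subtype.ext h1)
    exact Prod.ext hc1 hc2
  · -- value equality
    intro σ hσ
    have hσ' := hσ
    rw [Finset.mem_filter] at hσ'
    obtain ⟨hhalf, hkey⟩ := hσ'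
    dsimp only
    have hfact : σ = psiPerm ht I hI hJ * rhoPerm ht (sigma1of ht σ) (sigma2of ht σ) := by
      apply Equiv.ext
      intro x
      by_cases hx : x.val < 2 * t
      · have e1 : x = posL ht ⟨x.val, hx⟩ := Fin.ext rfl
        conv_lhs => rw [e1]
        conv_rhs => rw [e1]
        rw [buildL, key1 ht I hI hkey]
      · have e1 : x = posR ht ⟨x.val - 2 * t, by have := x.isLt; omega⟩ := by
          apply Fin.ext; simp [posR]; omega
        conv_lhs => rw [e1]
        conv_rhs => rw [e1]
        rw [buildR, key2 ht I hJ hkey]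
    have hsign : ((Equiv.Perm.sign σ : ℤ) : R) =
        ((Equiv.Perm.sign (psiPerm ht I hI hJ) : ℤ) : R) *
        (((Equiv.Perm.sign (sigma1of ht σ) : ℤ) : R) *
         ((Equiv.Perm.sign (sigma2of ht σ) : ℤ) : R)) := by
      conv_lhs => rw [hfact]
      rw [Equiv.Perm.sign_mul, sign_rhoPerm]
      push_cast
      ring
    have hprod : ∏ i : Fin n, B (σ (pfIdx1 i)) (σ (pfIdx2 i)) =
        (∏ i : Fin t, B (I.orderIsoOfFin hI ((sigma1of ht σ) (pfIdx1 i)) : Fin (2 * n))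
            (I.orderIsoOfFin hI ((sigma1of ht σ) (pfIdx2 i)) : Fin (2 * n))) *
        (∏ i : Fin (n - t), B (Iᶜ.orderIsoOfFin hJ ((sigma2of ht σ) (pfIdx1 i)) : Fin (2 * n))
            (Iᶜ.orderIsoOfFin hJ ((sigma2of ht σ) (pfIdx2 i)) : Fin (2 * n))) := by
      have hnt : t + (n - t) = n := by omega
      rw [← Equiv.prod_comp (finCongr hnt) (fun i : Fin n => B (σ (pfIdx1 i)) (σ (pfIdx2 i)))]
      rw [Fin.prod_univ_add]
      congr 1
      · apply Finset.prod_congr rfl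
        intro i _
        have e1 : pfIdx1 (finCongr hnt (Fin.castAdd (n - t) i)) = posL ht (pfIdx1 i) := by
          apply Fin.ext; simp [posL, pfIdx1]
        have e2 : pfIdx2 (finCongr hnt (Fin.castAdd (n - t) i)) = posL ht (pfIdx2 i) := by
          apply Fin.ext; simp [posL, pfIdx2]
        rw [e1, e2, ← key1 ht I hI hkey, ← key1 ht I hI hkey]
      · apply Finset.prod_congr rfl
        intro i _
        have e1 : pfIdx1 (finCongr hnt (Fin.natAdd t i)) = posR ht (pfIdx1 i) := by
          apply Fin.ext; simp [posR, pfIdx1]; omega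
        have e2 : pfIdx2 (finCongr hnt (Fin.natAdd t i)) = posR ht (pfIdx2 i) := by
          apply Fin.ext; simp [posR, pfIdx2]; omega
        rw [e1, e2, ← key2 ht I hJ hkey, ← key2 ht I hJ hkey]
    rw [hsign, hprod]
    ring

end fiber


theorem pfaffian_laplace_expansion {R : Type*} [CommRing R] (n t : ℕ)
    (ht : t ≤ n) (hfac : IsUnit ((n.factorial : R)))
    (B : Matrix (Fin (2 * n)) (Fin (2 * n)) R)
    (hB : ∀ i j, B j i = -B i j) (hBd : ∀ i, B i i = 0) :
    (n.choose t : R) * pfaffian B =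
      ∑ I ∈ (Finset.powersetCard (2 * t)
            (Finset.univ : Finset (Fin (2 * n)))).attach,
        (-1 : R) ^ (Finset.univ.filter
            (fun p : Fin (2 * n) × Fin (2 * n) =>
              p.1 ∈ I.1 ∧ p.2 ∈ I.1ᶜ ∧ p.2 < p.1)).card *
          pfaffian (B.submatrix
            (fun j : Fin (2 * t) =>
              (I.1.orderIsoOfFin (Finset.mem_powersetCard.mp I.2).2 j : Fin (2 * n)))
            (fun j : Fin (2 * t) =>
              (I.1.orderIsoOfFin (Finset.mem_powersetCard.mp I.2).2 j : Fin (2 * n)))) *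
          pfaffian (B.submatrix
            (fun j : Fin (2 * (n - t)) =>
              ((I.1ᶜ).orderIsoOfFin (by
                rw [Finset.card_compl, Fintype.card_fin,
                  (Finset.mem_powersetCard.mp I.2).2]; omega) j : Fin (2 * n)))
            (fun j : Fin (2 * (n - t)) =>
              ((I.1ᶜ).orderIsoOfFin (by
                rw [Finset.card_compl, Fintype.card_fin,
                  (Finset.mem_powersetCard.mp I.2).2]; omega) j : Fin (2 * n)))) := by
  have hu : IsUnit (((t.factorial * (n - t).factorial : ℕ) : R)) := by
    have hn : n.choose t * t.factorial * (n - t).factorial = n.factorial :=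
      Nat.choose_mul_factorial_mul_factorial ht
    have hcast : ((n.factorial : ℕ) : R) =
        (n.choose t : R) * ((t.factorial * (n - t).factorial : ℕ) : R) := by
      rw [← hn]; push_cast; ring
    rw [hcast] at hfac
    exact isUnit_of_mul_isUnit_right hfac
  apply hu.mul_left_cancel
  have hL : ((t.factorial * (n - t).factorial : ℕ) : R) * ((n.choose t : R) * pfaffian B) =
      (n.factorial : R) * pfaffian B := by
    rw [← Nat.choose_mul_factorial_mul_factorial ht]
    push_cast
    ring
  rw [hL, ← halfSum_eq n B]
  have hmaps : ∀ σ ∈ halfPerms n, keyI ht σ ∈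
      Finset.powersetCard (2 * t) (Finset.univ : Finset (Fin (2 * n))) := by
    intro σ _
    rw [Finset.mem_powersetCard]
    exact ⟨Finset.subset_univ _, card_image_univ (gL_inj ht σ)⟩
  rw [← Finset.sum_fiberwise_of_maps_to hmaps
    (fun σ => ((Equiv.Perm.sign σ : ℤ) : R) * ∏ i : Fin n, B (σ (pfIdx1 i)) (σ (pfIdx2 i)))]
  rw [← Finset.sum_attach (Finset.powersetCard (2 * t)
      (Finset.univ : Finset (Fin (2 * n))))
    (fun I' => ∑ σ ∈ (halfPerms n).filter (fun σ => keyI ht σ = I'),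
      ((Equiv.Perm.sign σ : ℤ) : R) * ∏ i : Fin n, B (σ (pfIdx1 i)) (σ (pfIdx2 i)))]
  rw [Finset.mul_sum]
  refine Finset.sum_congr rfl fun I _ => ?_
  have hcard : I.1.card = 2 * t := (Finset.mem_powersetCard.mp I.2).2
  have hJc : I.1ᶜ.card = 2 * (n - t) := by
    rw [Finset.card_compl, Fintype.card_fin, hcard]; omega
  rw [fiber_sum ht I.1 hcard hJc B]
  have e1 : (∑ σ1 ∈ halfPerms t, ((Equiv.Perm.sign σ1 : ℤ) : R) * ∏ i : Fin t,
        B (I.1.orderIsoOfFin hcard (σ1 (pfIdx1 i)) : Fin (2 * n))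
          (I.1.orderIsoOfFin hcard (σ1 (pfIdx2 i)) : Fin (2 * n))) =
      (t.factorial : R) * pfaffian (B.submatrix
        (fun j : Fin (2 * t) => (I.1.orderIsoOfFin hcard j : Fin (2 * n)))
        (fun j : Fin (2 * t) => (I.1.orderIsoOfFin hcard j : Fin (2 * n)))) := by
    rw [← halfSum_eq t]
    refine Finset.sum_congr rfl fun σ1 _ => ?_
    congr 1
  have e2 : (∑ σ2 ∈ halfPerms (n - t), ((Equiv.Perm.sign σ2 : ℤ) : R) * ∏ i : Fin (n - t),
        B (I.1ᶜ.orderIsoOfFin hJc (σ2 (pfIdx1 i)) : Fin (2 * n))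
          (I.1ᶜ.orderIsoOfFin hJc (σ2 (pfIdx2 i)) : Fin (2 * n))) =
      ((n - t).factorial : R) * pfaffian (B.submatrix
        (fun j : Fin (2 * (n - t)) => (I.1ᶜ.orderIsoOfFin hJc j : Fin (2 * n)))
        (fun j : Fin (2 * (n - t)) => (I.1ᶜ.orderIsoOfFin hJc j : Fin (2 * n)))) := by
    rw [← halfSum_eq (n - t)]
    refine Finset.sum_congr rfl fun σ2 _ => ?_
    congr 1
  rw [e1, e2]
  have esign : ((Equiv.Perm.sign (psiPerm ht I.1 hcard hJc) : ℤ) : R) =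
      (-1 : R) ^ (Finset.univ.filter
        (fun p : Fin (2 * n) × Fin (2 * n) =>
          p.1 ∈ I.1 ∧ p.2 ∈ I.1ᶜ ∧ p.2 < p.1)).card := by
    rw [sign_psiPerm]
    push_cast
    ring
  rw [esign]
  push_cast
  ring


end PfaffianAux
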